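/- Let 𝔤 = 𝔰𝔩₂(ℂ) with standard basis h, e, f and γ₂ = ½ h⊗h + e⊗f + f⊗e. The rational solution ρ(z) = (1/z)·γ₂ + ½·(h⊗f − f⊗h) satisfies the classical Yang–Baxter equation with one spectral parameter: for all x, y ∈ ℂ with x ≠ 0, y ≠ 0 and x+y ≠ 0, one has [ρ(x), ρ(x+y)]^{12,13} + [ρ(x+y), ρ(y)]^{13,23} + [ρ(x), ρ(y)]^{12,23} = 0. -/

import Mathlib

open scoped TensorProduct
open Matrix

noncomputable section

/-- The Lie algebra of `2 × 2` complex matrices (ambient algebra of `𝔰𝔩₂(ℂ)`). -/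
abbrev M2 : Type := Matrix (Fin 2) (Fin 2) ℂ

/-- `h = e₁₁ - e₂₂`. -/
def hM : M2 := Matrix.single 0 0 1 - Matrix.single 1 1 1

/-- `e = e₁₂`. -/
def eM : M2 := Matrix.single 0 1 1

/-- `f = e₂₁`. -/
def fM : M2 := Matrix.single 1 0 1

section Brackets
set_option linter.unnecessarySeqFocus false

lemma lie_hh : ⁅hM, hM⁆ = (0 : M2) := by rw [Ring.lie_def, sub_self]
lemma lie_ee : ⁅eM, eM⁆ = (0 : M2) := by rw [Ring.lie_def, sub_self]
lemma lie_ff : ⁅fM, fM⁆ = (0 : M2) := by rw [Ring.lie_def, sub_self]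
lemma lie_he : ⁅hM, eM⁆ = (2:ℂ) • eM := by
  ext i j; fin_cases i <;> fin_cases j <;>
    simp [Ring.lie_def, hM, eM, Matrix.mul_apply, Fin.sum_univ_two, Matrix.single] <;> norm_num
lemma lie_hf : ⁅hM, fM⁆ = (-2:ℂ) • fM := by
  ext i j; fin_cases i <;> fin_cases j <;>
    simp [Ring.lie_def, hM, fM, Matrix.mul_apply, Fin.sum_univ_two, Matrix.single] <;> norm_num
lemma lie_ef : ⁅eM, fM⁆ = (1:ℂ) • hM := by
  ext i j; fin_cases i <;> fin_cases j <;>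
    simp [Ring.lie_def, hM, eM, fM, Matrix.mul_apply, Fin.sum_univ_two, Matrix.single] <;> norm_num
lemma lie_eh : ⁅eM, hM⁆ = (-2:ℂ) • eM := by
  rw [Ring.lie_def, ← neg_sub, ← Ring.lie_def, lie_he]; module
lemma lie_fh : ⁅fM, hM⁆ = (2:ℂ) • fM := by
  rw [Ring.lie_def, ← neg_sub, ← Ring.lie_def, lie_hf]; module
lemma lie_fe : ⁅fM, eM⁆ = (-1:ℂ) • hM := by
  rw [Ring.lie_def, ← neg_sub, ← Ring.lie_def, lie_ef]; module

end Brackets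

/-- The Casimir element `γ₂ = ½ h⊗h + e⊗f + f⊗e` of `𝔰𝔩₂(ℂ)`. -/
def γ₂ : M2 ⊗[ℂ] M2 := (1 / 2 : ℂ) • (hM ⊗ₜ[ℂ] hM) + eM ⊗ₜ[ℂ] fM + fM ⊗ₜ[ℂ] eM

/-- The rational solution `ρ(z) = γ₂/z + ½(h⊗f − f⊗h)` for `𝔰𝔩₂(ℂ)`. -/
def ρRat (z : ℂ) : M2 ⊗[ℂ] M2 :=
  z⁻¹ • γ₂ + (1 / 2 : ℂ) • (hM ⊗ₜ[ℂ] fM - fM ⊗ₜ[ℂ] hM)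

lemma ρRat_eq (z : ℂ) :
    ρRat z = z⁻¹ • γ₂ + (1 / 2 : ℂ) • (hM ⊗ₜ[ℂ] fM) + (-(1 / 2) : ℂ) • (fM ⊗ₜ[ℂ] hM) := by
  rw [ρRat]; module

set_option maxHeartbeats 2000000 in
/-- The rational solution `ρ(z) = γ₂/z + ½(h⊗f − f⊗h)` satisfies the
classical Yang–Baxter equation with one spectral parameter. -/
theorem statement19
    (B1213 B1223 B1323 :
      (M2 ⊗[ℂ] M2) →ₗ[ℂ] (M2 ⊗[ℂ] M2) →ₗ[ℂ] (M2 ⊗[ℂ] (M2 ⊗[ℂ] M2)))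
    (hB1213 : ∀ a b c d : M2,
      B1213 (a ⊗ₜ[ℂ] b) (c ⊗ₜ[ℂ] d) = ⁅a, c⁆ ⊗ₜ[ℂ] (b ⊗ₜ[ℂ] d))
    (hB1223 : ∀ a b c d : M2,
      B1223 (a ⊗ₜ[ℂ] b) (c ⊗ₜ[ℂ] d) = a ⊗ₜ[ℂ] (⁅b, c⁆ ⊗ₜ[ℂ] d))
    (hB1323 : ∀ a b c d : M2,
      B1323 (a ⊗ₜ[ℂ] b) (c ⊗ₜ[ℂ] d) = a ⊗ₜ[ℂ] (c ⊗ₜ[ℂ] ⁅b, d⁆))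
    :
    ∀ x y : ℂ, x ≠ 0 → y ≠ 0 → x + y ≠ 0 →
      B1213 (ρRat x) (ρRat (x + y)) + B1323 (ρRat (x + y)) (ρRat y)
        + B1223 (ρRat x) (ρRat y) = 0 := by
  intro x y hx hy hxy
  simp only [ρRat_eq, γ₂, map_add, _root_.map_smul, LinearMap.add_apply, LinearMap.smul_apply,
    _root_.map_sub, LinearMap.sub_apply, smul_lie, lie_smul, smul_add, smul_sub,
    hB1213, hB1223, hB1323,
    lie_hh, lie_ee, lie_ff, lie_he, lie_hf, lie_ef, lie_eh, lie_fh, lie_fe,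
    ← TensorProduct.smul_tmul', TensorProduct.tmul_smul,
    TensorProduct.zero_tmul, TensorProduct.tmul_zero, smul_zero]
  match_scalars <;> field_simp <;> ring

end
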